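/- Let K be an algebraically closed field, G a group acting linearly on Kⁿ, I ⊆ K[x₁,…,xₙ] a G-invariant ideal whose variety V = V(I) is G-transitive and connected in the Euclidean (or Zariski) topology. Then K[X]/I has a unique associated prime, i.e., I is a primary ideal. -/

import Mathlib

open Ideal MvPolynomial

section AssFinite
variable {R : Type*} [CommRing R] {M : Type*} [AddCommGroup M] [Module R M]

theorem stmt10_ass_subset_union (N : Submodule R M) :
    associatedPrimes R M ⊆ associatedPrimes R N ∪ associatedPrimes R (M ⧸ N) := by
  exact associatedPrimes.subset_union_of_exact (f := N.subtype) (g := N.mkQ)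
    N.injective_subtype (LinearMap.exact_subtype_mkQ N)

theorem stmt10_ass_quot_prime {p : Ideal R} (hp : p.IsPrime) :
    associatedPrimes R (R ⧸ p) ⊆ {p} := by
  rintro q ⟨hq, x, hx⟩
  obtain ⟨x, rfl⟩ := Submodule.Quotient.mk_surjective _ x
  have hmem : ∀ s : R, s ∈ q ↔ ∃ m : ℕ, s ^ m * x ∈ p := by
    intro s
    rw [hx, Ideal.mem_radical_iff]
    simp_rw [Submodule.mem_colon_singleton, Submodule.mem_bot, ← Submodule.Quotient.mk_smul,
      Submodule.Quotient.mk_eq_zero, smul_eq_mul]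
  have hxp : x ∉ p := by
    intro hxp
    exact hq.ne_top (Ideal.eq_top_iff_one _ |>.mpr ((hmem 1).mpr ⟨0, by rwa [one_pow, one_mul]⟩))
  have : q = p := by
    ext s
    rw [hmem]
    exact ⟨fun ⟨m, h⟩ => hp.mem_of_pow_mem m ((hp.mem_or_mem h).resolve_right hxp),
      fun h => ⟨1, by rw [pow_one]; exact p.mul_mem_right x h⟩⟩
  simp [this]

theorem stmt10_associatedPrimes_finite (R M : Type*) [CommRing R] [AddCommGroup M] [Module R M]
    [IsNoetherianRing R] [IsNoetherian R M] : (associatedPrimes R M).Finite := by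
  have key : ∀ N : Submodule R M, (associatedPrimes R (M ⧸ N)).Finite := by
    intro N
    induction N using IsNoetherian.induction with
    | hgt N IH =>
      by_cases hN : N = ⊤
      · subst hN
        haveI : Subsingleton (M ⧸ (⊤ : Submodule R M)) :=
          Submodule.Quotient.subsingleton_iff.mpr rfl
        rw [associatedPrimes.eq_empty_of_subsingleton]
        exact Set.finite_empty
      · haveI : Nontrivial (M ⧸ N) :=
          Submodule.Quotient.nontrivial_iff.mpr hN
        obtain ⟨p, hp⟩ := associatedPrimes.nonempty R (M ⧸ N)
        obtain ⟨hprime, y, hy⟩ := isAssociatedPrime_iff.mp hp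
        obtain ⟨x, rfl⟩ := Submodule.Quotient.mk_surjective _ y
        have hxN : x ∉ N := by
          intro hx
          apply hprime.ne_top
          rw [hy, Ideal.eq_top_iff_one, Submodule.mem_colon_singleton, one_smul,
            Submodule.mem_bot, Submodule.Quotient.mk_eq_zero]
          exact hx
        set N' : Submodule R M := N ⊔ R ∙ x with hN'def
        have hNN' : N ≤ N' := le_sup_left
        have hlt : N < N' := by
          rw [lt_iff_le_and_ne]
          refine ⟨hNN', fun h => hxN ?_⟩
          rw [h]
          exact Submodule.mem_sup_right (Submodule.mem_span_singleton_self x)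
        have hfin' : (associatedPrimes R (M ⧸ N')).Finite := IH N' hlt
        have hb : Submodule.map N.mkQ N = ⊥ := by
          rw [Submodule.eq_bot_iff]
          rintro z ⟨y, hy, rfl⟩
          simpa [Submodule.Quotient.mk_eq_zero] using hy
        have hmap : N'.map N.mkQ = (R ∙ (Submodule.Quotient.mk x : M ⧸ N)) := by
          rw [hN'def, Submodule.map_sup, Submodule.map_span]
          simp only [Set.image_singleton, Submodule.mkQ_apply]
          rw [hb, bot_sup_eq]
        have hsub := stmt10_ass_subset_union (M := M ⧸ N) (N'.map N.mkQ)
        have h1 : associatedPrimes R (N'.map N.mkQ) ⊆ {p} := by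
          rw [hmap]
          have e1 : (R ⧸ p) ≃ₗ[R] (R ∙ (Submodule.Quotient.mk x : M ⧸ N)) := by
            have hker : LinearMap.ker (LinearMap.toSpanSingleton R (M ⧸ N)
                (Submodule.Quotient.mk x)) = p := by
              ext s
              rw [LinearMap.mem_ker, LinearMap.toSpanSingleton_apply, hy,
                Submodule.mem_colon_singleton, Submodule.mem_bot]
            exact ((Submodule.quotEquivOfEq _ _ hker.symm).trans
              (LinearMap.quotKerEquivRange _)).trans
              (LinearEquiv.ofEq _ _ (LinearMap.span_singleton_eq_range R (M ⧸ N)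
                (Submodule.Quotient.mk x)).symm)
          rw [← LinearEquiv.AssociatedPrimes.eq e1]
          exact stmt10_ass_quot_prime hprime
        have h2 : associatedPrimes R ((M ⧸ N) ⧸ N'.map N.mkQ)
            = associatedPrimes R (M ⧸ N') :=
          LinearEquiv.AssociatedPrimes.eq (Submodule.quotientQuotientEquivQuotient N N' hNN')
        apply Set.Finite.subset (Set.Finite.union (Set.finite_singleton p) hfin')
        intro q hq
        rcases hsub hq with h | h
        · exact Or.inl (h1 h)
        · exact Or.inr (h2 ▸ h)
  have := key ⊥
  rwa [LinearEquiv.AssociatedPrimes.eq (Submodule.quotEquivOfEqBot ⊥ rfl)] at this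

end AssFinite

section ZeroLocus
variable {K : Type*} [Field K] {n : ℕ}

theorem stmt10_zeroLocus_inf (J J' : Ideal (MvPolynomial (Fin n) K)) :
    zeroLocus K (J ⊓ J') = zeroLocus K J ∪ zeroLocus K J' := by
  apply subset_antisymm
  · intro x hx
    by_contra hc
    simp only [Set.mem_union, not_or] at hc
    obtain ⟨hc1, hc2⟩ := hc
    rw [mem_zeroLocus_iff] at hc1 hc2
    push_neg at hc1 hc2
    obtain ⟨f, hf, hfx⟩ := hc1
    obtain ⟨f', hf', hfx'⟩ := hc2
    have hm : f * f' ∈ J ⊓ J' := ⟨J.mul_mem_right f' hf, J'.mul_mem_left f hf'⟩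
    have := hx _ hm
    rw [_root_.map_mul] at this
    exact hfx (by
      rcases mul_eq_zero.mp this with h | h
      · exact h
      · exact absurd h hfx')
  · rintro x (hx | hx)
    · exact fun p hp => hx p hp.1
    · exact fun p hp => hx p hp.2

theorem stmt10_zeroLocus_finset_inf {ι : Type*} (s : Finset ι)
    (f : ι → Ideal (MvPolynomial (Fin n) K)) :
    zeroLocus K (s.inf f) = ⋃ i ∈ s, zeroLocus K (f i) := by
  classical
  induction s using Finset.induction_on with
  | empty => simp [zeroLocus_top, Set.bot_eq_empty]
  | insert _ _ hnotmem ih =>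
    rename_i a s
    rw [Finset.inf_insert, stmt10_zeroLocus_inf, ih]
    simp [Set.iUnion_or, Set.iUnion_union_distrib]

theorem stmt10_zeroLocus_radical (J : Ideal (MvPolynomial (Fin n) K)) :
    zeroLocus K J.radical = zeroLocus K J := by
  apply subset_antisymm
  · exact zeroLocus_anti_mono le_radical
  · intro x hx f hf
    obtain ⟨m, hm⟩ := hf
    have := hx _ hm
    rw [map_pow] at this
    exact (pow_eq_zero_iff'.mp this).1

end ZeroLocus

namespace Stmt10Aux

variable {K : Type*} [Field K] {n : ℕ} {G : Type*} [Group G]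
  (ρ : G →* ((Fin n → K) ≃ₗ[K] (Fin n → K)))

noncomputable def sub (g : G) :
    MvPolynomial (Fin n) K →ₐ[K] MvPolynomial (Fin n) K :=
  MvPolynomial.aeval (fun i : Fin n =>
    ∑ j : Fin n, MvPolynomial.C ((ρ g)⁻¹ (Pi.single j (1 : K)) i) * MvPolynomial.X j)

theorem eval_sub_apply (g : G) (f : MvPolynomial (Fin n) K) (x : Fin n → K) :
    eval x (sub ρ g f) = eval ((ρ g)⁻¹ x) f := by
  have h1 : (ρ g)⁻¹ x = fun i => ∑ j : Fin n, (ρ g)⁻¹ (Pi.single j (1 : K)) i * x j := by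
    have hx : x = ∑ j : Fin n, x j • (Pi.single j (1 : K) : Fin n → K) := by
      funext i
      simp [Pi.single_apply, Finset.sum_apply, mul_comm]
    conv_lhs => rw [hx]
    rw [map_sum]
    funext i
    simp only [Finset.sum_apply, map_smul]
    refine Finset.sum_congr rfl fun j _ => ?_
    simp [mul_comm]
  have : eval x (sub ρ g f) = MvPolynomial.aeval x (sub ρ g f) := by
    rw [MvPolynomial.aeval_eq_eval₂Hom]
    rfl
  rw [this, h1, sub, MvPolynomial.aeval_eq_bind₁, MvPolynomial.aeval_bind₁]
  have h2 : (fun i => MvPolynomial.aeval x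
      (∑ j : Fin n, C ((ρ g)⁻¹ (Pi.single j (1:K)) i) * X j))
      = fun i => ∑ j : Fin n, (ρ g)⁻¹ (Pi.single j 1) i * x j := by
    funext i
    simp
  rw [h2]
  rw [MvPolynomial.aeval_eq_eval₂Hom]
  rfl

variable [IsAlgClosed K]

theorem sub_sub (g h : G) (f : MvPolynomial (Fin n) K) :
    sub ρ g (sub ρ h f) = sub ρ (g * h) f := by
  apply MvPolynomial.funext
  intro x
  rw [eval_sub_apply, eval_sub_apply, eval_sub_apply]
  have : ((ρ (g * h))⁻¹ : (Fin n → K) ≃ₗ[K] (Fin n → K)) x = (ρ h)⁻¹ ((ρ g)⁻¹ x) := by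
    rw [_root_.map_mul, mul_inv_rev]
    rfl
  rw [this]

theorem sub_one (f : MvPolynomial (Fin n) K) : sub ρ 1 f = f := by
  apply MvPolynomial.funext
  intro x
  rw [eval_sub_apply, map_one, inv_one]
  rfl

theorem zeroLocus_comap (g : G) (J : Ideal (MvPolynomial (Fin n) K)) :
    zeroLocus K (J.comap (sub ρ g)) = ⇑(ρ g) ⁻¹' zeroLocus K J := by
  ext y
  simp only [Set.mem_preimage, mem_zeroLocus_iff]
  constructor
  · intro hy q hq
    have hmem : sub ρ g⁻¹ q ∈ J.comap (sub ρ g) := by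
      rw [Ideal.mem_comap, sub_sub, mul_inv_cancel, sub_one]
      exact hq
    have := hy _ hmem
    change eval _ _ = 0 at this
    rw [eval_sub_apply, map_inv, inv_inv] at this
    exact this
  · intro hy r hr
    rw [Ideal.mem_comap] at hr
    have := hy _ hr
    change eval _ _ = 0 at this
    rw [eval_sub_apply] at this
    rwa [show ((ρ g)⁻¹ : (Fin n → K) ≃ₗ[K] (Fin n → K)) ((ρ g) y) = y from
      (ρ g).symm_apply_apply y] at this

end Stmt10Aux

/-- Let `K` be algebraically closed, `G` a group acting linearly on `Kⁿ`,
`I` a `G`-invariant ideal whose variety `V = V(I)` is `G`-transitive and connected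
(in the Zariski topology). Then `I` is primary (equivalently, `K[X]/I` has a unique
associated prime). -/
theorem stmt_10 {K : Type*} [Field K] [IsAlgClosed K] (n : ℕ)
    {G : Type*} [Group G] (ρ : G →* ((Fin n → K) ≃ₗ[K] (Fin n → K)))
    (I : Ideal (MvPolynomial (Fin n) K))
    (hinvI : ∀ g : G, ∀ f ∈ I,
      MvPolynomial.aeval (fun i : Fin n =>
        ∑ j : Fin n, MvPolynomial.C ((ρ g)⁻¹ (Pi.single j (1 : K)) i) *
          MvPolynomial.X j) f ∈ I)
    (V : Set (Fin n → K)) (hV : V = MvPolynomial.zeroLocus K I) (hne : V.Nonempty)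
    (htrans : ∀ x ∈ V, ∀ y ∈ V, ∃ g : G, ρ g x = y)
    (hconn : ∀ I₁ I₂ : Ideal (MvPolynomial (Fin n) K),
      V = (MvPolynomial.zeroLocus K I₁ ∩ V) ∪ (MvPolynomial.zeroLocus K I₂ ∩ V) →
      MvPolynomial.zeroLocus K I₁ ∩ MvPolynomial.zeroLocus K I₂ ∩ V = ∅ →
      MvPolynomial.zeroLocus K I₁ ∩ V = ∅ ∨ MvPolynomial.zeroLocus K I₂ ∩ V = ∅) :
    I.IsPrimary := by
  classical
  set R := MvPolynomial (Fin n) K with hRdef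
  -- membership invariance of I under sub
  have hsub_mem : ∀ (g : G) (f : R), Stmt10Aux.sub ρ g f ∈ I ↔ f ∈ I := by
    intro g f
    constructor
    · intro h
      have h2 : Stmt10Aux.sub ρ g⁻¹ (Stmt10Aux.sub ρ g f) ∈ I := hinvI g⁻¹ _ h
      rwa [Stmt10Aux.sub_sub, inv_mul_cancel, Stmt10Aux.sub_one] at h2
    · intro h; exact hinvI g f h
  have hItop : I ≠ ⊤ := by
    intro h
    obtain ⟨x, hx⟩ := hne
    rw [hV] at hx
    have := hx 1 (by rw [h]; trivial)
    simp at this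
  haveI : Nontrivial (R ⧸ I) :=
    Submodule.Quotient.nontrivial_iff.mpr hItop
  set Ass := associatedPrimes R (R ⧸ I) with hAssdef
  have hAssFin : Ass.Finite := stmt10_associatedPrimes_finite R (R ⧸ I)
  have hAssNe : Ass.Nonempty := associatedPrimes.nonempty R (R ⧸ I)
  have hIleP : ∀ P ∈ Ass, I ≤ P := by
    intro P hP
    refine le_trans ?_ hP.annihilator_le
    intro i hi
    rw [Submodule.mem_annihilator]
    intro m _
    obtain ⟨z, rfl⟩ := Submodule.Quotient.mk_surjective _ m
    rw [← Submodule.Quotient.mk_smul, Submodule.Quotient.mk_eq_zero, smul_eq_mul]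
    exact I.mul_mem_right z hi
  have hPprime : ∀ P ∈ Ass, P.IsPrime := fun P hP => hP.isPrime
  -- translation of associated primes
  have htrAss : ∀ (g : G), ∀ P ∈ Ass, P.comap (Stmt10Aux.sub ρ g) ∈ Ass := by
    intro g P hP
    obtain ⟨hp, y, hy⟩ := isAssociatedPrime_iff.mp hP
    obtain ⟨x₀, rfl⟩ := Submodule.Quotient.mk_surjective _ y
    refine isAssociatedPrime_iff.mpr ⟨hp.comap _, ⟨Submodule.Quotient.mk (Stmt10Aux.sub ρ g⁻¹ x₀), ?_⟩⟩
    ext r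
    rw [Ideal.mem_comap, Submodule.mem_colon_singleton, Submodule.mem_bot,
      ← Submodule.Quotient.mk_smul, Submodule.Quotient.mk_eq_zero, smul_eq_mul]
    have hPmem : ∀ s : R, s ∈ P ↔ s * x₀ ∈ I := by
      intro s
      rw [hy, Submodule.mem_colon_singleton, Submodule.mem_bot, ← Submodule.Quotient.mk_smul,
        Submodule.Quotient.mk_eq_zero, smul_eq_mul]
    rw [hPmem]
    rw [← hsub_mem g (r * Stmt10Aux.sub ρ g⁻¹ x₀), _root_.map_mul, Stmt10Aux.sub_sub,
      mul_inv_cancel, Stmt10Aux.sub_one]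
  -- basic facts about zero loci of associated primes
  have hzlsubV : ∀ P ∈ Ass, zeroLocus K P ⊆ V := by
    intro P hP
    rw [hV]
    exact zeroLocus_anti_mono (hIleP P hP)
  have hviP : ∀ P ∈ Ass, vanishingIdeal K (zeroLocus K P) = P := by
    intro P hP
    rw [vanishingIdeal_zeroLocus_eq_radical, (hPprime P hP).radical]
  have hzlne : ∀ P ∈ Ass, (zeroLocus K P).Nonempty := by
    intro P hP
    rcases Set.eq_empty_or_nonempty (zeroLocus K P) with h | h
    · exfalso
      have := hviP P hP
      rw [h, vanishingIdeal_empty] at this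
      exact (hPprime P hP).ne_top this.symm
    · exact h
  -- covering of V
  have hcover : ∀ y ∈ V, ∃ P ∈ Ass, y ∈ zeroLocus K P := by
    intro y hy
    obtain ⟨P₀, hP₀⟩ := hAssNe
    obtain ⟨z, hz⟩ := hzlne P₀ hP₀
    obtain ⟨g, hg⟩ := htrans z (hzlsubV P₀ hP₀ hz) y hy
    refine ⟨P₀.comap (Stmt10Aux.sub ρ g⁻¹), htrAss g⁻¹ P₀ hP₀, ?_⟩
    rw [Stmt10Aux.zeroLocus_comap]
    have hyz : (ρ g⁻¹) y = z := by
      rw [← hg, map_inv]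
      exact (ρ g).symm_apply_apply z
    rw [Set.mem_preimage, hyz]
    exact hz
  -- the finite family of closed sets
  set 𝒱 : Finset (Set (Fin n → K)) := hAssFin.toFinset.image (fun P => zeroLocus K P)
    with h𝒱def
  have hmem𝒱 : ∀ W : Set (Fin n → K), W ∈ 𝒱 ↔ ∃ P ∈ Ass, zeroLocus K P = W := by
    intro W
    simp [h𝒱def, Set.Finite.mem_toFinset]
    exact Iff.rfl
  have h𝒱subV : ∀ W ∈ 𝒱, W ⊆ V := by
    intro W hW
    obtain ⟨P, hP, rfl⟩ := (hmem𝒱 W).mp hW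
    exact hzlsubV P hP
  have h𝒱ne : ∀ W ∈ 𝒱, W.Nonempty := by
    intro W hW
    obtain ⟨P, hP, rfl⟩ := (hmem𝒱 W).mp hW
    exact hzlne P hP
  have h𝒱vi : ∀ W ∈ 𝒱, (vanishingIdeal K W).IsPrime ∧ zeroLocus K (vanishingIdeal K W) = W := by
    intro W hW
    obtain ⟨P, hP, rfl⟩ := (hmem𝒱 W).mp hW
    rw [hviP P hP]
    exact ⟨hPprime P hP, rfl⟩
  -- maximal elements
  set Mx : Finset (Set (Fin n → K)) := 𝒱.filter (fun W => ∀ W' ∈ 𝒱, W ⊆ W' → W = W')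
    with hMxdef
  have hMxsub : Mx ⊆ 𝒱 := Finset.filter_subset _ _
  have hMxmax : ∀ W ∈ Mx, ∀ W' ∈ 𝒱, W ⊆ W' → W = W' := by
    intro W hW
    exact (Finset.mem_filter.mp hW).2
  have hexmax : ∀ W ∈ 𝒱, ∃ W' ∈ Mx, W ⊆ W' := by
    intro W hW
    obtain ⟨W', hW'mem, hW'max⟩ := Set.Finite.exists_maximalFor id
      {W' | W' ∈ 𝒱 ∧ W ⊆ W'} (𝒱.finite_toSet.subset (fun _ h => h.1)) ⟨W, hW, subset_rfl⟩
    refine ⟨W', Finset.mem_filter.mpr ⟨hW'mem.1, ?_⟩, hW'mem.2⟩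
    intro W'' hW'' hsub
    exact Set.Subset.antisymm hsub (hW'max ⟨hW'', hW'mem.2.trans hsub⟩ hsub)
  -- the action on the family
  have hρcomp : ∀ (g : G) (x : Fin n → K), (ρ g⁻¹) ((ρ g) x) = x := by
    intro g x
    rw [map_inv]
    exact (ρ g).symm_apply_apply x
  have htau𝒱 : ∀ (g : G), ∀ W ∈ 𝒱, ⇑(ρ g) ⁻¹' W ∈ 𝒱 := by
    intro g W hW
    obtain ⟨P, hP, rfl⟩ := (hmem𝒱 W).mp hW
    exact (hmem𝒱 _).mpr ⟨P.comap (Stmt10Aux.sub ρ g), htrAss g P hP,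
      Stmt10Aux.zeroLocus_comap ρ g P⟩
  have htauid : ∀ (g : G) (W : Set (Fin n → K)), ⇑(ρ g⁻¹) ⁻¹' (⇑(ρ g) ⁻¹' W) = W := by
    intro g W
    ext x
    simp only [Set.mem_preimage]
    rw [show (ρ g) ((ρ g⁻¹) x) = x by
      rw [map_inv]; exact (ρ g).apply_symm_apply x]
  have htauMx : ∀ (g : G), ∀ W ∈ Mx, ⇑(ρ g) ⁻¹' W ∈ Mx := by
    intro g W hW
    refine Finset.mem_filter.mpr ⟨htau𝒱 g W (hMxsub hW), ?_⟩
    intro W' hW' hsub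
    have h1 : W ⊆ ⇑(ρ g⁻¹) ⁻¹' W' := by
      rw [← htauid g W]
      exact Set.preimage_mono hsub
    have h2 := hMxmax W hW _ (htau𝒱 g⁻¹ W' hW') h1
    have htauid2 : ⇑(ρ g) ⁻¹' (⇑(ρ g⁻¹) ⁻¹' W') = W' := by
      have := htauid g⁻¹ W'
      rwa [inv_inv] at this
    rw [h2]
    exact htauid2
  -- good points
  set Good : (Fin n → K) → Prop :=
    fun x => ∀ W ∈ Mx, ∀ W' ∈ Mx, x ∈ W → x ∈ W' → W = W' with hGooddef
  have hGoodmap : ∀ (g : G) (x : Fin n → K), Good x → Good ((ρ g) x) := by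
    intro g x hx W hW W' hW' hmW hmW'
    have h1 : x ∈ ⇑(ρ g) ⁻¹' W := hmW
    have h2 : x ∈ ⇑(ρ g) ⁻¹' W' := hmW'
    have := hx _ (htauMx g W hW) _ (htauMx g W' hW') h1 h2
    rw [← htauid g W, ← htauid g W', this]
  -- existence of a good point and the top stratum W₀
  obtain ⟨P₀', hP₀'⟩ := hAssNe
  have hW₁mem : zeroLocus K P₀' ∈ 𝒱 := (hmem𝒱 _).mpr ⟨P₀', hP₀', rfl⟩
  obtain ⟨W₀, hW₀Mx, _⟩ := hexmax _ hW₁mem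
  have hW₀𝒱 : W₀ ∈ 𝒱 := hMxsub hW₀Mx
  have hgoodpt : ∃ x₀ ∈ V, Good x₀ := by
    by_cases hc : W₀ ⊆ ⋃ W ∈ Mx.erase W₀, (W : Set (Fin n → K))
    · exfalso
      have hq0 : (vanishingIdeal K W₀).IsPrime := (h𝒱vi W₀ hW₀𝒱).1
      have hinfle : (Mx.erase W₀).inf (vanishingIdeal K) ≤ vanishingIdeal K W₀ := by
        intro f hf
        rw [mem_vanishingIdeal_iff]
        intro x hx
        obtain ⟨W, hW⟩ := Set.mem_iUnion.mp (hc hx)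
        obtain ⟨hWmem, hxW⟩ := Set.mem_iUnion.mp hW
        have hfW : f ∈ vanishingIdeal K W := (Submodule.mem_finsetInf.mp hf) W hWmem
        exact (mem_vanishingIdeal_iff.mp hfW) x hxW
      obtain ⟨W, hWmem, hWle⟩ := (Ideal.IsPrime.inf_le' hq0).mp hinfle
      have hW𝒱 : W ∈ 𝒱 := hMxsub (Finset.mem_of_mem_erase hWmem)
      have hsubW : W₀ ⊆ W := by
        have h1 := zeroLocus_anti_mono (K := K) hWle
        rwa [(h𝒱vi W₀ hW₀𝒱).2, (h𝒱vi W hW𝒱).2] at h1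
      have := hMxmax W₀ hW₀Mx W hW𝒱 hsubW
      exact (Finset.ne_of_mem_erase hWmem) this.symm
    · rw [Set.not_subset] at hc
      obtain ⟨x₀, hx₀W₀, hx₀not⟩ := hc
      refine ⟨x₀, h𝒱subV W₀ hW₀𝒱 hx₀W₀, ?_⟩
      intro W hW W' hW' hmW hmW'
      have hkey : ∀ W'' ∈ Mx, x₀ ∈ W'' → W'' = W₀ := by
        intro W'' hW''Mx hmem
        by_contra hne''
        exact hx₀not (Set.mem_iUnion.mpr ⟨W'', Set.mem_iUnion.mpr
          ⟨Finset.mem_erase.mpr ⟨hne'', hW''Mx⟩, hmem⟩⟩)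
      rw [hkey W hW hmW, hkey W' hW' hmW']
  obtain ⟨x₀, hx₀V, hx₀Good⟩ := hgoodpt
  have hGoodAll : ∀ y ∈ V, Good y := by
    intro y hy
    obtain ⟨g, hg⟩ := htrans x₀ hx₀V y hy
    rw [← hg]
    exact hGoodmap g x₀ hx₀Good
  -- V is covered by maximal strata
  have hcovermax : ∀ y ∈ V, ∃ W ∈ Mx, y ∈ W := by
    intro y hy
    obtain ⟨P, hP, hyP⟩ := hcover y hy
    obtain ⟨W, hWMx, hsub⟩ := hexmax _ ((hmem𝒱 _).mpr ⟨P, hP, rfl⟩)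
    exact ⟨W, hWMx, hsub hyP⟩
  -- there is only one maximal stratum
  have hMxsingle : ∀ W ∈ Mx, W = W₀ := by
    intro W₁ hW₁Mx
    by_contra hne₁
    have h1 : MvPolynomial.zeroLocus K (vanishingIdeal K W₀) = W₀ := (h𝒱vi W₀ hW₀𝒱).2
    set I₂ : Ideal R := (Mx.erase W₀).inf (vanishingIdeal K) with hI₂def
    have hzlI₂ : MvPolynomial.zeroLocus K I₂ = ⋃ W ∈ Mx.erase W₀, (W : Set (Fin n → K)) := by
      rw [hI₂def, stmt10_zeroLocus_finset_inf]
      apply Set.ext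
      intro x
      simp only [Set.mem_iUnion]
      constructor
      · rintro ⟨W, hW, hx⟩
        rw [(h𝒱vi W (hMxsub (Finset.mem_of_mem_erase hW))).2] at hx
        exact ⟨W, hW, hx⟩
      · rintro ⟨W, hW, hx⟩
        refine ⟨W, hW, ?_⟩
        rw [(h𝒱vi W (hMxsub (Finset.mem_of_mem_erase hW))).2]
        exact hx
    have hcov : V = (MvPolynomial.zeroLocus K (vanishingIdeal K W₀) ∩ V) ∪
        (MvPolynomial.zeroLocus K I₂ ∩ V) := by
      apply subset_antisymm
      · intro y hy
        obtain ⟨W, hWMx, hyW⟩ := hcovermax y hy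
        by_cases hWW₀ : W = W₀
        · refine Or.inl ⟨?_, hy⟩
          rw [h1, ← hWW₀]
          exact hyW
        · refine Or.inr ⟨?_, hy⟩
          rw [hzlI₂]
          exact Set.mem_iUnion.mpr ⟨W, Set.mem_iUnion.mpr
            ⟨Finset.mem_erase.mpr ⟨hWW₀, hWMx⟩, hyW⟩⟩
      · rintro y (⟨_, hy⟩ | ⟨_, hy⟩) <;> exact hy
    have hdisj : MvPolynomial.zeroLocus K (vanishingIdeal K W₀) ∩ MvPolynomial.zeroLocus K I₂ ∩ V
        = ∅ := by
      rw [Set.eq_empty_iff_forall_notMem]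
      rintro z ⟨⟨hz₀, hz₂⟩, hzV⟩
      rw [h1] at hz₀
      rw [hzlI₂] at hz₂
      obtain ⟨W, hW⟩ := Set.mem_iUnion.mp hz₂
      obtain ⟨hWmem, hzW⟩ := Set.mem_iUnion.mp hW
      have := hGoodAll z hzV W₀ hW₀Mx W (Finset.mem_of_mem_erase hWmem) hz₀ hzW
      exact (Finset.ne_of_mem_erase hWmem) this.symm
    rcases hconn _ _ hcov hdisj with h | h
    · obtain ⟨z, hz⟩ := h𝒱ne W₀ hW₀𝒱
      rw [Set.eq_empty_iff_forall_notMem] at h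
      exact h z ⟨by rw [h1]; exact hz, h𝒱subV W₀ hW₀𝒱 hz⟩
    · obtain ⟨z, hz⟩ := h𝒱ne W₁ (hMxsub hW₁Mx)
      rw [Set.eq_empty_iff_forall_notMem] at h
      apply h z
      refine ⟨?_, h𝒱subV W₁ (hMxsub hW₁Mx) hz⟩
      rw [hzlI₂]
      exact Set.mem_iUnion.mpr ⟨W₁, Set.mem_iUnion.mpr
        ⟨Finset.mem_erase.mpr ⟨hne₁, hW₁Mx⟩, hz⟩⟩
  have hVeqW₀ : V = W₀ := by
    apply subset_antisymm
    · intro y hy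
      obtain ⟨W, hWMx, hyW⟩ := hcovermax y hy
      rwa [hMxsingle W hWMx] at hyW
    · exact h𝒱subV W₀ hW₀𝒱
  -- the radical is invariant
  have hradinv : ∀ g : G, (Ideal.radical I).comap (Stmt10Aux.sub ρ g) = Ideal.radical I := by
    intro g
    ext r
    rw [Ideal.mem_comap, Ideal.mem_radical_iff, Ideal.mem_radical_iff]
    constructor
    · rintro ⟨m, hm⟩
      rw [← map_pow] at hm
      exact ⟨m, (hsub_mem g _).mp hm⟩
    · rintro ⟨m, hm⟩
      exact ⟨m, by rw [← map_pow]; exact (hsub_mem g _).mpr hm⟩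
  have hviV : vanishingIdeal K V = Ideal.radical I := by
    rw [hV, vanishingIdeal_zeroLocus_eq_radical]
  -- every associated prime has zero locus V
  have hzlP : ∀ P ∈ Ass, zeroLocus K P = V := by
    intro P hP
    by_contra hPne
    -- translates also have proper zero locus
    have htrne : ∀ g : G, MvPolynomial.zeroLocus K (P.comap (Stmt10Aux.sub ρ g)) ≠ V := by
      intro g hEq
      apply hPne
      have hcomapAss := htrAss g P hP
      have h1 : P.comap (Stmt10Aux.sub ρ g) = Ideal.radical I := by
        rw [← hviP _ hcomapAss, hEq, hviV]
      have h2 : P = (P.comap (Stmt10Aux.sub ρ g)).comap (Stmt10Aux.sub ρ g⁻¹) := by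
        ext r
        rw [Ideal.mem_comap, Ideal.mem_comap, Stmt10Aux.sub_sub, mul_inv_cancel,
          Stmt10Aux.sub_one]
      rw [h2, h1, hradinv]
      rw [hV, ← stmt10_zeroLocus_radical I]
    -- V covered by proper strata
    have hcov' : ∀ y ∈ V, ∃ W ∈ 𝒱.filter (· ≠ V), y ∈ W := by
      intro y hy
      obtain ⟨z, hz⟩ := hzlne P hP
      obtain ⟨g, hg⟩ := htrans z (hzlsubV P hP hz) y hy
      refine ⟨MvPolynomial.zeroLocus K (P.comap (Stmt10Aux.sub ρ g⁻¹)),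
        Finset.mem_filter.mpr ⟨(hmem𝒱 _).mpr ⟨_, htrAss g⁻¹ P hP, rfl⟩, htrne g⁻¹⟩, ?_⟩
      rw [Stmt10Aux.zeroLocus_comap]
      have hyz : (ρ g⁻¹) y = z := by
        rw [← hg, map_inv]
        exact (ρ g).symm_apply_apply z
      rw [Set.mem_preimage, hyz]
      exact hz
    have hqprime : (vanishingIdeal K V).IsPrime := by
      rw [hVeqW₀]
      exact (h𝒱vi W₀ hW₀𝒱).1
    have hinfle : (𝒱.filter (· ≠ V)).inf (vanishingIdeal K) ≤ vanishingIdeal K V := by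
      intro f hf
      rw [mem_vanishingIdeal_iff]
      intro x hx
      obtain ⟨W, hWmem, hxW⟩ := hcov' x hx
      have hfW : f ∈ vanishingIdeal K W := (Submodule.mem_finsetInf.mp hf) W hWmem
      exact (mem_vanishingIdeal_iff.mp hfW) x hxW
    obtain ⟨W, hWmem, hWle⟩ := (Ideal.IsPrime.inf_le' hqprime).mp hinfle
    have hW𝒱 : W ∈ 𝒱 := (Finset.mem_filter.mp hWmem).1
    have hWneV : W ≠ V := (Finset.mem_filter.mp hWmem).2
    apply hWneV
    apply subset_antisymm (h𝒱subV W hW𝒱)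
    have h1 := zeroLocus_anti_mono (K := K) hWle
    rw [(h𝒱vi W hW𝒱).2] at h1
    refine subset_trans ?_ h1
    intro y hy
    rw [hVeqW₀] at hy
    rw [← (h𝒱vi W₀ hW₀𝒱).2] at hy
    rw [hVeqW₀]
    rwa [← hVeqW₀] at hy ⊢
  -- every associated prime equals the radical
  have hPrad : ∀ P ∈ Ass, P = Ideal.radical I := by
    intro P hP
    rw [← hviP P hP, hzlP P hP, hviV]
  -- conclude primality
  rw [Ideal.isPrimary_iff]
  refine ⟨hItop, ?_⟩
  intro a b hab
  by_cases ha : a ∈ I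
  · exact Or.inl ha
  · right
    have hmk : (Submodule.Quotient.mk a : R ⧸ I) ≠ 0 := by
      rw [Ne, Submodule.Quotient.mk_eq_zero]
      exact ha
    obtain ⟨P, hP, hle⟩ := exists_le_isAssociatedPrime_of_isNoetherianRing R
      (Submodule.Quotient.mk a : R ⧸ I) hmk
    have hb : b ∈ P := by
      apply hle
      rw [Submodule.mem_colon_singleton, Submodule.mem_bot, ← Submodule.Quotient.mk_smul,
        Submodule.Quotient.mk_eq_zero, smul_eq_mul, mul_comm]
      exact hab
    rwa [hPrad P hP] at hb
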